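/- With the notation above, if L is a system of generators of the homogeneous ideal J ⊆ B, then the set L' ∪ H generates the kernel I_J of φ: S → R, where L' = {f^{(k)} : f ∈ L, 0 ≤ k ≤ deg f} and H = {x_i y_j − x_j y_i : 1 ≤ i < j ≤ n}. -/

import Mathlib

set_option synthInstance.maxHeartbeats 1000000
set_option maxHeartbeats 2000000

open MvPolynomial

noncomputable def tailWeight (n : ℕ) (u : Fin n →₀ ℕ) (m : ℕ) : Fin n →₀ ℕ :=
  Finsupp.onFinset u.support
    (fun j => min (u j) (m - ∑ l ∈ Finset.univ.filter (fun l => j < l), u l))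
    (by
      intro j h
      rw [Finsupp.mem_support_iff]
      intro h0
      apply h
      simp [h0])

noncomputable def reesLift {k : Type*} [Field k] {n : ℕ}
    (f : MvPolynomial (Fin n) k) (m : ℕ) : MvPolynomial (Fin n ⊕ Fin n) k :=
  ∑ u ∈ f.support,
    MvPolynomial.monomial
      (Finsupp.mapDomain Sum.inl (u - tailWeight n u m) +
        Finsupp.mapDomain Sum.inr (tailWeight n u m)) (f.coeff u)


namespace KR

variable {n : ℕ}

/-- upper-tail sum -/
def T (u : Fin n →₀ ℕ) (j : Fin n) : ℕ := ∑ l ∈ Finset.univ.filter (fun l => j < l), u l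

lemma tailWeight_apply (u : Fin n →₀ ℕ) (m : ℕ) (j : Fin n) :
    tailWeight n u m j = min (u j) (m - T u j) := rfl

lemma tailWeight_le (u : Fin n →₀ ℕ) (m : ℕ) (j : Fin n) :
    tailWeight n u m j ≤ u j := min_le_left _ _

lemma sum_tailWeight (u : Fin n →₀ ℕ) (m : ℕ) :
    ∑ j, tailWeight n u m j = min m (∑ j, u j) := by
  have key : ∀ i ≤ n,
      ∑ j ∈ Finset.univ.filter (fun j : Fin n => n - i ≤ (j : ℕ)), tailWeight n u m j
        = min m (∑ j ∈ Finset.univ.filter (fun j : Fin n => n - i ≤ (j : ℕ)), u j) := by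
    intro i hi
    induction i with
    | zero =>
      have h0 : Finset.univ.filter (fun j : Fin n => n - 0 ≤ (j : ℕ)) = ∅ := by
        ext j; simp only [Finset.mem_filter, Finset.mem_univ, true_and, Finset.notMem_empty,
          iff_false, not_le, Nat.sub_zero]
        exact j.isLt
      rw [h0]
      simp
    | succ i ih =>
      have hi' : i ≤ n := by omega
      have hin : i < n := by omega
      set j0 : Fin n := ⟨n - i - 1, by omega⟩ with hj0
      have hset : Finset.univ.filter (fun j : Fin n => n - (i+1) ≤ (j : ℕ))
          = insert j0 (Finset.univ.filter (fun j : Fin n => n - i ≤ (j : ℕ))) := by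
        ext j
        simp [hj0, Fin.ext_iff]
        omega
      have hnotmem : j0 ∉ Finset.univ.filter (fun j : Fin n => n - i ≤ (j : ℕ)) := by
        simp [hj0]; omega
      have hT : T u j0 = ∑ j ∈ Finset.univ.filter (fun j : Fin n => n - i ≤ (j : ℕ)), u j := by
        apply Finset.sum_congr _ (fun _ _ => rfl)
        ext l
        simp [Fin.lt_def, hj0]
        omega
      rw [hset, Finset.sum_insert hnotmem, Finset.sum_insert hnotmem, ih hi',
        tailWeight_apply, hT]
      omega
  have := key n le_rfl
  have huniv : Finset.univ.filter (fun j : Fin n => n - n ≤ (j : ℕ)) = Finset.univ := by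
    ext j; simp
  rwa [huniv] at this

/-- characterization: a splitting with the "all mass at the end" property is the tail. -/
lemma eq_tailWeight (u b : Fin n →₀ ℕ) (m : ℕ)
    (hle : ∀ j, b j ≤ u j)
    (hsum : ∑ j, b j = min m (∑ j, u j))
    (hmax : ∀ i j : Fin n, i < j → 0 < b i → b j = u j) :
    b = tailWeight n u m := by
  have hble : ∑ l, b l ≤ ∑ l, u l := Finset.sum_le_sum (fun l _ => hle l)
  ext j
  rw [tailWeight_apply]
  by_cases hex : ∃ i, i < j ∧ 0 < b i
  · obtain ⟨i, hij, hbi⟩ := hex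
    have hbj : b j = u j := hmax i j hij hbi
    have h1 : u j + T u j ≤ ∑ l, b l := by
      have e1 : Finset.univ.filter (fun l : Fin n => j ≤ l)
          = insert j (Finset.univ.filter (fun l : Fin n => j < l)) := by
        ext l
        simp only [Finset.mem_filter, Finset.mem_univ, true_and, Finset.mem_insert,
          Fin.le_def, Fin.lt_def, Fin.ext_iff]
        omega
      have e2 : u j + T u j = ∑ l ∈ Finset.univ.filter (fun l : Fin n => j ≤ l), u l := by
        rw [e1, Finset.sum_insert (by simp)]; rfl
      rw [e2]
      calc ∑ l ∈ Finset.univ.filter (fun l : Fin n => j ≤ l), u l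
          = ∑ l ∈ Finset.univ.filter (fun l : Fin n => j ≤ l), b l := by
            apply Finset.sum_congr rfl
            intro l hl
            simp only [Finset.mem_filter, Finset.mem_univ, true_and] at hl
            rcases eq_or_lt_of_le hl with h' | h'
            · rw [← h', hbj]
            · exact (hmax i l (lt_trans hij h') hbi).symm
        _ ≤ ∑ l, b l := Finset.sum_le_sum_of_subset (Finset.filter_subset _ _)
    have h2 : ∑ l, b l ≤ m := by rw [hsum]; exact min_le_left _ _
    have h3 := le_trans h1 h2
    omega
  · push_neg at hex
    have hsplit : ∑ l, b l = (∑ l ∈ Finset.univ.filter (fun l : Fin n => j < l), b l) + b j := by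
      rw [← Finset.sum_filter_add_sum_filter_not Finset.univ (fun l : Fin n => j < l) b]
      congr 1
      rw [Finset.sum_eq_single_of_mem j (by simp)]
      intro l hl hne
      simp only [Finset.mem_filter, Finset.mem_univ, true_and, not_lt] at hl
      have hlj : l < j := lt_of_le_of_ne hl hne
      have := hex l hlj
      omega
    by_cases hbj : 0 < b j
    · have hTb : T u j = ∑ l ∈ Finset.univ.filter (fun l : Fin n => j < l), b l := by
        apply Finset.sum_congr rfl
        intro l hl
        simp only [Finset.mem_filter, Finset.mem_univ, true_and] at hl
        exact (hmax j l hl hbj).symm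
      rcases le_or_gt m (∑ l, u l) with hm | hm
      · have hsb : ∑ l, b l = m := by rw [hsum]; omega
        have hj := hle j
        rw [hTb]
        omega
      · have hsb : ∑ l, b l = ∑ l, u l := by rw [hsum]; omega
        have hbu : ∀ l, b l = u l := by
          intro l
          by_contra hne
          have hlt : b l < u l := lt_of_le_of_ne (hle l) hne
          have : ∑ x, b x < ∑ x, u x :=
            Finset.sum_lt_sum (fun x _ => hle x) ⟨l, Finset.mem_univ l, hlt⟩
          omega
        have hTu : T u j = ∑ l ∈ Finset.univ.filter (fun l : Fin n => j < l), b l :=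
          Finset.sum_congr rfl (fun l _ => (hbu l).symm)
        have h4 : u j + T u j ≤ ∑ l, b l := by rw [hTu, ← hbu j]; omega
        rw [hbu j]
        omega
    · have hbj0 : b j = 0 := by omega
      rw [hbj0]
      by_cases huj : u j = 0
      · simp [huj]
      · rcases le_or_gt m (∑ l, u l) with hm | hm
        · have hsb : ∑ l, b l = m := by rw [hsum]; omega
          have h5 : ∑ l, b l ≤ T u j := by
            rw [hsplit, hbj0]
            unfold T
            have := Finset.sum_le_sum (s := Finset.univ.filter (fun l : Fin n => j < l))
              (fun l _ => hle l)
            omega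
          omega
        · have hsb : ∑ l, b l = ∑ l, u l := by rw [hsum]; omega
          have hbu : ∀ l, b l = u l := by
            intro l
            by_contra hne
            have hlt : b l < u l := lt_of_le_of_ne (hle l) hne
            have : ∑ x, b x < ∑ x, u x :=
              Finset.sum_lt_sum (fun x _ => hle x) ⟨l, Finset.mem_univ l, hlt⟩
            omega
          exact absurd ((hbu j).symm.trans hbj0) huj



noncomputable def Ap (v : (Fin n ⊕ Fin n) →₀ ℕ) : Fin n →₀ ℕ :=
  Finsupp.equivFunOnFinite.symm (fun j => v (Sum.inl j))
noncomputable def Bp (v : (Fin n ⊕ Fin n) →₀ ℕ) : Fin n →₀ ℕ :=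
  Finsupp.equivFunOnFinite.symm (fun j => v (Sum.inr j))

@[simp] lemma Ap_apply (v : (Fin n ⊕ Fin n) →₀ ℕ) (j : Fin n) : Ap v j = v (Sum.inl j) := rfl
@[simp] lemma Bp_apply (v : (Fin n ⊕ Fin n) →₀ ℕ) (j : Fin n) : Bp v j = v (Sum.inr j) := rfl

@[simp] lemma md_inl_inl (a : Fin n →₀ ℕ) (j : Fin n) :
    Finsupp.mapDomain (Sum.inl : Fin n → Fin n ⊕ Fin n) a (Sum.inl j) = a j :=
  Finsupp.mapDomain_apply Sum.inl_injective a j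
@[simp] lemma md_inr_inr (a : Fin n →₀ ℕ) (j : Fin n) :
    Finsupp.mapDomain (Sum.inr : Fin n → Fin n ⊕ Fin n) a (Sum.inr j) = a j :=
  Finsupp.mapDomain_apply Sum.inr_injective a j
@[simp] lemma md_inl_inr (a : Fin n →₀ ℕ) (j : Fin n) :
    Finsupp.mapDomain (Sum.inl : Fin n → Fin n ⊕ Fin n) a (Sum.inr j) = 0 :=
  Finsupp.mapDomain_notin_range a _ (by simp)
@[simp] lemma md_inr_inl (a : Fin n →₀ ℕ) (j : Fin n) :
    Finsupp.mapDomain (Sum.inr : Fin n → Fin n ⊕ Fin n) a (Sum.inl j) = 0 :=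
  Finsupp.mapDomain_notin_range a _ (by simp)

noncomputable def mg (v : (Fin n ⊕ Fin n) →₀ ℕ) : Fin n →₀ ℕ := Ap v + Bp v

lemma mg_apply (v : (Fin n ⊕ Fin n) →₀ ℕ) (j : Fin n) :
    mg v j = v (Sum.inl j) + v (Sum.inr j) := rfl

def yd (v : (Fin n ⊕ Fin n) →₀ ℕ) : ℕ := ∑ j, v (Sum.inr j)
def tot (v : (Fin n ⊕ Fin n) →₀ ℕ) : ℕ := ∑ p, v p

lemma tot_eq (v : (Fin n ⊕ Fin n) →₀ ℕ) : tot v = ∑ j, mg v j := by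
  unfold tot
  rw [Fintype.sum_sum_type]
  simp [mg_apply, Finset.sum_add_distrib]

lemma decompV (v : (Fin n ⊕ Fin n) →₀ ℕ) :
    v = Finsupp.mapDomain Sum.inl (Ap v) + Finsupp.mapDomain Sum.inr (Bp v) := by
  ext p
  cases p <;> simp [Finsupp.add_apply]

/-- normal form exponent for merged vector u and tail size m -/
noncomputable def norE (u : Fin n →₀ ℕ) (m : ℕ) : (Fin n ⊕ Fin n) →₀ ℕ :=
  Finsupp.mapDomain Sum.inl (u - tailWeight n u m) + Finsupp.mapDomain Sum.inr (tailWeight n u m)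

def Hset (n : ℕ) (k : Type*) [Field k] : Set (MvPolynomial (Fin n ⊕ Fin n) k) :=
  {g | ∃ i j : Fin n, i < j ∧
    g = X (Sum.inl i) * X (Sum.inr j) - X (Sum.inl j) * X (Sum.inr i)}

def meas (v : (Fin n ⊕ Fin n) →₀ ℕ) : ℕ := ∑ l : Fin n, (n - (l : ℕ)) * v (Sum.inr l)

variable {k : Type*} [Field k]

lemma monomial_sub_norE_mem (m : ℕ) (v : (Fin n ⊕ Fin n) →₀ ℕ) (c : k)
    (hv : yd v = min m (tot v)) :
    (monomial v c : MvPolynomial (Fin n ⊕ Fin n) k) - monomial (norE (mg v) m) c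
      ∈ Ideal.span (Hset n k) := by
  suffices H : ∀ N (v : (Fin n ⊕ Fin n) →₀ ℕ), meas v < N → yd v = min m (tot v) →
      (monomial v c : MvPolynomial (Fin n ⊕ Fin n) k) - monomial (norE (mg v) m) c
        ∈ Ideal.span (Hset n k) from H (meas v + 1) v (Nat.lt_succ_self _) hv
  intro N
  induction N with
  | zero => intro v h; omega
  | succ N ih =>
    intro v hlt hyd
    by_cases hb : Bp v = tailWeight n (mg v) m
    · have hAeq : mg v - tailWeight n (mg v) m = Ap v := by
        rw [← hb]; ext j; simp [mg_apply, Finsupp.tsub_apply]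
      have : norE (mg v) m = v := by
        rw [norE, hAeq, ← hb, ← decompV]
      rw [this, sub_self]
      exact Ideal.zero_mem _
    · -- there is a move
      have hmax' : ¬ ∀ i j : Fin n, i < j → 0 < Bp v i → Bp v j = mg v j := by
        intro h
        exact hb (eq_tailWeight (mg v) (Bp v) m
          (fun j => by simp [mg_apply])
          (by rw [← tot_eq, ← hyd]; rfl)
          h)
      push_neg at hmax'
      obtain ⟨i, j, hij, hbi, hne⟩ := hmax'
      have hbij : Bp v j ≤ mg v j := by simp [mg_apply]
      have haj : 0 < Ap v j := by
        have := lt_of_le_of_ne hbij hne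
        simp [mg_apply] at this ⊢
        omega
      have hinej : i ≠ j := ne_of_lt hij
      have hbiv : 0 < v (Sum.inr i) := hbi
      have hajv : 0 < v (Sum.inl j) := haj
      set a' : Fin n →₀ ℕ := Ap v - Finsupp.single j 1 + Finsupp.single i 1 with ha'
      set b' : Fin n →₀ ℕ := Bp v - Finsupp.single i 1 + Finsupp.single j 1 with hb'
      set v' : (Fin n ⊕ Fin n) →₀ ℕ :=
        Finsupp.mapDomain Sum.inl a' + Finsupp.mapDomain Sum.inr b' with hv'
      have ha'app : ∀ l, a' l = Ap v l - (if j = l then 1 else 0) + (if i = l then 1 else 0) := by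
        intro l; simp [ha', Finsupp.tsub_apply, Finsupp.single_apply]
      have hb'app : ∀ l, b' l = Bp v l - (if i = l then 1 else 0) + (if j = l then 1 else 0) := by
        intro l; simp [hb', Finsupp.tsub_apply, Finsupp.single_apply]
      have hv'inl : ∀ l, v' (Sum.inl l) = a' l := by intro l; simp [hv', Finsupp.add_apply]
      have hv'inr : ∀ l, v' (Sum.inr l) = b' l := by intro l; simp [hv', Finsupp.add_apply]
      have hmg : mg v' = mg v := by
        ext l
        rw [mg_apply, mg_apply, hv'inl, hv'inr, ha'app, hb'app]
        by_cases hil : i = l <;> by_cases hjl : j = l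
        · exact absurd (hil.trans hjl.symm) hinej
        · subst hil; simp [hjl]; omega
        · subst hjl; simp [hil]; omega
        · simp [hil, hjl]
      have hydeq : yd v' = yd v := by
        unfold yd
        have : ∀ l, v' (Sum.inr l) + (if i = l then 1 else 0)
            = v (Sum.inr l) + (if j = l then 1 else 0) := by
          intro l
          rw [hv'inr, hb'app]
          by_cases hil : i = l <;> by_cases hjl : j = l
          · exact absurd (hil.trans hjl.symm) hinej
          · subst hil; simp [hjl]; omega
          · subst hjl; simp [hil]
          · simp [hil, hjl]
        have hs := Finset.sum_congr rfl (fun l (_ : l ∈ Finset.univ) => this l)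
        rw [Finset.sum_add_distrib, Finset.sum_add_distrib] at hs
        simp [Finset.sum_ite_eq] at hs
        omega
      have htot : tot v' = tot v := by rw [tot_eq, tot_eq, hmg]
      have hmeas : meas v' < meas v := by
        unfold meas
        have : ∀ l : Fin n, (n - (l:ℕ)) * v' (Sum.inr l) + (n - (l:ℕ)) * (if i = l then 1 else 0)
            = (n - (l:ℕ)) * v (Sum.inr l) + (n - (l:ℕ)) * (if j = l then 1 else 0) := by
          intro l
          rw [← Nat.mul_add, ← Nat.mul_add]
          congr 1
          rw [hv'inr, hb'app]
          by_cases hil : i = l <;> by_cases hjl : j = l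
          · exact absurd (hil.trans hjl.symm) hinej
          · subst hil; simp [hjl]; omega
          · subst hjl; simp [hil]
          · simp [hil, hjl]
        have hs := Finset.sum_congr rfl (fun l (_ : l ∈ Finset.univ) => this l)
        rw [Finset.sum_add_distrib, Finset.sum_add_distrib] at hs
        simp [Finset.sum_ite_eq, mul_ite] at hs
        have hji : (n : ℕ) - (j:ℕ) < n - (i:ℕ) := by
          have h1 : (i:ℕ) < (j:ℕ) := hij
          have h2 : (j:ℕ) < n := j.isLt
          omega
        omega
      -- the pivot exponent w
      set w : (Fin n ⊕ Fin n) →₀ ℕ :=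
        Finsupp.mapDomain Sum.inl (Ap v - Finsupp.single j 1) +
        Finsupp.mapDomain Sum.inr (Bp v - Finsupp.single i 1) with hw
      have key1 : w + (Finsupp.single (Sum.inl j) 1 + Finsupp.single (Sum.inr i) 1) = v := by
        ext p
        cases p with
        | inl l =>
          simp [hw, Finsupp.add_apply, Finsupp.single_apply, Finsupp.tsub_apply]
          by_cases hjl : j = l
          · subst hjl; simp; omega
          · simp [hjl]
        | inr l =>
          simp [hw, Finsupp.add_apply, Finsupp.single_apply, Finsupp.tsub_apply]
          by_cases hil : i = l
          · subst hil; simp; omega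
          · simp [hil]
      have key2 : w + (Finsupp.single (Sum.inl i) 1 + Finsupp.single (Sum.inr j) 1) = v' := by
        ext p
        cases p with
        | inl l =>
          rw [Finsupp.add_apply, hv'inl, ha'app]
          simp [hw, Finsupp.add_apply, Finsupp.single_apply, Finsupp.tsub_apply]
        | inr l =>
          rw [Finsupp.add_apply, hv'inr, hb'app]
          simp [hw, Finsupp.add_apply, Finsupp.single_apply, Finsupp.tsub_apply]
      have e1 : (monomial w (c : k)) * (X (Sum.inl j) * X (Sum.inr i)) = monomial v c := by
        rw [X, X, monomial_mul, monomial_mul, mul_one, mul_one, ← add_assoc]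
        rw [add_assoc, key1]
      have e2 : (monomial w (c : k)) * (X (Sum.inl i) * X (Sum.inr j)) = monomial v' c := by
        rw [X, X, monomial_mul, monomial_mul, mul_one, mul_one, ← add_assoc]
        rw [add_assoc, key2]
      have hmem1 : (monomial v c : MvPolynomial (Fin n ⊕ Fin n) k) - monomial v' c
          ∈ Ideal.span (Hset n k) := by
        have hg : (X (Sum.inl i) * X (Sum.inr j) - X (Sum.inl j) * X (Sum.inr i) :
            MvPolynomial (Fin n ⊕ Fin n) k) ∈ Ideal.span (Hset n k) :=
          Ideal.subset_span ⟨i, j, hij, rfl⟩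
        have := Ideal.mul_mem_left _ (-(monomial w c)) hg
        have heq : (-(monomial w c)) *
            (X (Sum.inl i) * X (Sum.inr j) - X (Sum.inl j) * X (Sum.inr i) :
              MvPolynomial (Fin n ⊕ Fin n) k)
            = monomial v c - monomial v' c := by
          rw [← e1, ← e2]; ring
        rwa [heq] at this
      have hmem2 := ih v' (by omega) (by rw [hydeq, htot]; exact hyd)
      rw [hmg] at hmem2
      have := Ideal.add_mem _ hmem1 hmem2
      simpa using this

variable {k : Type*} [Field k]

noncomputable def mu : MvPolynomial (Fin n ⊕ Fin n) k →ₐ[k] MvPolynomial (Fin n) k :=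
  aeval (Sum.elim X X)

lemma mu_monomial (v : (Fin n ⊕ Fin n) →₀ ℕ) (c : k) :
    mu (monomial v c) = monomial (mg v) c := by
  rw [mu, aeval_monomial, monomial_eq, Finsupp.prod_pow, Finsupp.prod_pow,
    Fintype.prod_sum_type]
  simp only [Sum.elim_inl, Sum.elim_inr, mg_apply, pow_add]
  rw [Finset.prod_mul_distrib]
  rfl

lemma reesLift_def' (p : MvPolynomial (Fin n) k) (m : ℕ) :
    reesLift p m = ∑ u ∈ p.support, monomial (norE u m) (coeff u p) := rfl

lemma reesLift_superset (p : MvPolynomial (Fin n) k) (m : ℕ) {t : Finset (Fin n →₀ ℕ)}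
    (ht : p.support ⊆ t) :
    reesLift p m = ∑ u ∈ t, monomial (norE u m) (coeff u p) := by
  rw [reesLift_def']
  apply Finset.sum_subset ht
  intro u _ hu
  rw [notMem_support_iff.mp hu, map_zero]

lemma reesLift_zero (m : ℕ) : reesLift (0 : MvPolynomial (Fin n) k) m = 0 := by
  rw [reesLift_def']
  simp

lemma reesLift_add (p q : MvPolynomial (Fin n) k) (m : ℕ) :
    reesLift (p + q) m = reesLift p m + reesLift q m := by
  classical
  have h1 : (p + q).support ⊆ p.support ∪ q.support := Finsupp.support_add
  rw [reesLift_superset (p + q) m (t := p.support ∪ q.support) h1,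
    reesLift_superset p m (t := p.support ∪ q.support) Finset.subset_union_left,
    reesLift_superset q m (t := p.support ∪ q.support) Finset.subset_union_right,
    ← Finset.sum_add_distrib]
  apply Finset.sum_congr rfl
  intro u _
  rw [coeff_add, map_add]

lemma reesLift_sum {α : Type*} (s : Finset α) (f : α → MvPolynomial (Fin n) k) (m : ℕ) :
    reesLift (∑ a ∈ s, f a) m = ∑ a ∈ s, reesLift (f a) m := by
  classical
  induction s using Finset.induction with
  | empty => simp [reesLift_zero]
  | insert _ _ hna ih => rw [Finset.sum_insert hna, Finset.sum_insert hna, reesLift_add, ih]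

lemma mg_norE (u : Fin n →₀ ℕ) (m : ℕ) : mg (norE u m) = u := by
  ext l
  rw [mg_apply]
  simp only [norE, Finsupp.add_apply, md_inl_inl, md_inr_inr, md_inl_inr, md_inr_inl,
    Finsupp.tsub_apply]
  have := tailWeight_le u m l
  omega

lemma yd_norE (u : Fin n →₀ ℕ) (m : ℕ) : yd (norE u m) = min m (∑ l, u l) := by
  unfold yd
  simp only [norE, Finsupp.add_apply, md_inr_inr, md_inl_inr, zero_add]
  exact sum_tailWeight u m

lemma tot_norE (u : Fin n →₀ ℕ) (m : ℕ) : tot (norE u m) = ∑ l, u l := by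
  rw [tot_eq, mg_norE]

lemma mu_reesLift (p : MvPolynomial (Fin n) k) (m : ℕ) : mu (reesLift p m) = p := by
  rw [reesLift_def', map_sum]
  conv_rhs => rw [as_sum p]
  apply Finset.sum_congr rfl
  intro u _
  rw [mu_monomial, mg_norE]

lemma reesLift_monomial (u : Fin n →₀ ℕ) (c : k) (m : ℕ) :
    reesLift (monomial u c) m = monomial (norE u m) c := by
  classical
  by_cases hc : c = 0
  · subst hc; rw [monomial_zero, reesLift_zero, monomial_zero]
  · rw [reesLift_def', support_monomial, if_neg hc, Finset.sum_singleton, coeff_monomial,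
      if_pos rfl]

lemma yd_le_tot (v : (Fin n ⊕ Fin n) →₀ ℕ) : yd v ≤ tot v := by
  unfold yd tot
  rw [Fintype.sum_sum_type]
  omega

/-- the polynomial-level congruence modulo the Koszul relations -/
lemma sub_reesLift_mu_mem (m : ℕ) (h : MvPolynomial (Fin n ⊕ Fin n) k)
    (hyp : ∀ v ∈ h.support, yd v = min m (tot v)) :
    h - reesLift (mu h) m ∈ Ideal.span (Hset n k) := by
  have hmu : mu h = ∑ v ∈ h.support, monomial (mg v) (coeff v h) := by
    conv_lhs => rw [as_sum h]
    rw [map_sum]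
    exact Finset.sum_congr rfl (fun v _ => mu_monomial v _)
  have key : h - reesLift (mu h) m
      = ∑ v ∈ h.support,
        ((monomial v (coeff v h)) - monomial (norE (mg v) m) (coeff v h)) := by
    rw [Finset.sum_sub_distrib, hmu, reesLift_sum]
    congr 1
    · exact as_sum h
    · exact Finset.sum_congr rfl (fun v _ => (reesLift_monomial _ _ _))
  rw [key]
  apply Ideal.sum_mem
  intro v hv
  exact monomial_sub_norE_mem m v (coeff v h) (hyp v hv)

/-- evaluation of a monomial under the Rees morphism -/
lemma phi_monomial (J : Ideal (MvPolynomial (Fin n) k)) (v : (Fin n ⊕ Fin n) →₀ ℕ) (c : k) :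
    aeval (Sum.elim
      (fun i => Polynomial.C (Ideal.Quotient.mk J (X i)))
      (fun i => Polynomial.C (Ideal.Quotient.mk J (X i)) * Polynomial.X))
      (monomial v c)
      = Polynomial.C (Ideal.Quotient.mk J (mu (monomial v c))) * Polynomial.X ^ (yd v) := by
  rw [aeval_monomial, mu_monomial, monomial_eq, Finsupp.prod_pow, Finsupp.prod_pow,
    Fintype.prod_sum_type]
  simp only [Sum.elim_inl, Sum.elim_inr, mul_pow, map_mul, map_prod, map_pow]
  rw [Finset.prod_congr rfl (fun x _ => mul_pow (M := Polynomial (MvPolynomial (Fin n) k ⧸ J)) _ _ _)]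
  rw [Finset.prod_mul_distrib, Finset.prod_pow_eq_pow_sum]
  simp only [mg_apply, pow_add, map_mul, map_pow, map_prod]
  unfold yd
  have halg : (algebraMap k (Polynomial (MvPolynomial (Fin n) k ⧸ J))) c
      = Polynomial.C ((Ideal.Quotient.mk J) (MvPolynomial.C c)) := by
    rw [Polynomial.algebraMap_apply]
    congr 1
  rw [halg, Finset.prod_mul_distrib]
  ring

lemma sum_univ_eq_degree (u : Fin n →₀ ℕ) : ∑ l, u l = Finsupp.degree u := by
  rw [Finsupp.degree]
  exact (Finset.sum_subset (Finset.subset_univ _)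
    (fun x _ hx => Finsupp.notMem_support_iff.mp hx)).symm

noncomputable def ycomp (d : ℕ) (g : MvPolynomial (Fin n ⊕ Fin n) k) :
    MvPolynomial (Fin n ⊕ Fin n) k :=
  ∑ v ∈ g.support.filter (fun v => yd v = d), monomial v (coeff v g)

lemma tot_eq_degree (v : (Fin n ⊕ Fin n) →₀ ℕ) : tot v = Finsupp.degree v := by
  rw [Finsupp.degree, tot]
  exact (Finset.sum_subset (Finset.subset_univ _)
    (fun x _ hx => Finsupp.notMem_support_iff.mp hx)).symm

lemma phi_coeff (J : Ideal (MvPolynomial (Fin n) k)) (g : MvPolynomial (Fin n ⊕ Fin n) k)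
    (d : ℕ) :
    (aeval (Sum.elim
      (fun i => Polynomial.C (Ideal.Quotient.mk J (X i)))
      (fun i => Polynomial.C (Ideal.Quotient.mk J (X i)) * Polynomial.X)) g).coeff d
      = Ideal.Quotient.mk J (mu (ycomp d g)) := by
  conv_lhs => rw [as_sum g]
  rw [map_sum, Polynomial.finset_sum_coeff]
  have hterm : ∀ v ∈ g.support,
      (aeval (Sum.elim
        (fun i => Polynomial.C (Ideal.Quotient.mk J (X i)))
        (fun i => Polynomial.C (Ideal.Quotient.mk J (X i)) * Polynomial.X))
        (monomial v (coeff v g))).coeff d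
      = if yd v = d then Ideal.Quotient.mk J (mu (monomial v (coeff v g))) else 0 := by
    intro v _
    rw [phi_monomial, Polynomial.coeff_C_mul, Polynomial.coeff_X_pow]
    by_cases h : yd v = d
    · simp [h]
    · simp [h, Ne.symm h]
  rw [Finset.sum_congr rfl hterm, ← Finset.sum_filter, ycomp, map_sum, map_sum]

lemma sum_ycomp (g : MvPolynomial (Fin n ⊕ Fin n) k) :
    ∑ d ∈ Finset.range (g.totalDegree + 1), ycomp d g = g := by
  unfold ycomp
  rw [Finset.sum_fiberwise_of_maps_to (g := yd) ?hmap (fun v => monomial v (coeff v g))]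
  · exact (as_sum g).symm
  · intro v hv
    rw [Finset.mem_range]
    have h1 : yd v ≤ tot v := yd_le_tot v
    have h2 : tot v ≤ g.totalDegree := by
      rw [tot_eq_degree]
      have := MvPolynomial.le_totalDegree (p := g) hv
      rwa [Finsupp.sum, ← Finsupp.degree_apply] at this
    omega

lemma support_ycomp (d : ℕ) (g : MvPolynomial (Fin n ⊕ Fin n) k) :
    ∀ v ∈ (ycomp d g).support, yd v = d := by
  classical
  intro v hv
  unfold ycomp at hv
  have := MvPolynomial.support_sum hv
  rw [Finset.mem_biUnion] at this
  obtain ⟨u, hu, hv2⟩ := this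
  rw [support_monomial] at hv2
  by_cases hc : coeff u g = 0
  · rw [if_pos hc] at hv2; exact absurd hv2 (Finset.notMem_empty v)
  · rw [if_neg hc, Finset.mem_singleton] at hv2
    subst hv2
    exact (Finset.mem_filter.mp hu).2

lemma phi_reesLift (J : Ideal (MvPolynomial (Fin n) k)) (f : MvPolynomial (Fin n) k)
    {d : ℕ} (hf : f.IsHomogeneous d) (m : ℕ) (hm : m ≤ d) :
    aeval (Sum.elim
      (fun i => Polynomial.C (Ideal.Quotient.mk J (X i)))
      (fun i => Polynomial.C (Ideal.Quotient.mk J (X i)) * Polynomial.X)) (reesLift f m)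
      = Polynomial.C (Ideal.Quotient.mk J f) * Polynomial.X ^ m := by
  rw [reesLift_def', map_sum]
  have hterm : ∀ u ∈ f.support,
      aeval (Sum.elim
        (fun i => Polynomial.C (Ideal.Quotient.mk J (X i)))
        (fun i => Polynomial.C (Ideal.Quotient.mk J (X i)) * Polynomial.X))
        (monomial (norE u m) (coeff u f))
      = Polynomial.C (Ideal.Quotient.mk J (monomial u (coeff u f))) * Polynomial.X ^ m := by
    intro u hu
    rw [phi_monomial, mu_monomial, mg_norE, yd_norE]
    have hdeg : ∑ l, u l = d := by
      rw [sum_univ_eq_degree, Finsupp.degree_eq_weight_one]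
      exact hf (mem_support_iff.mp hu)
    rw [hdeg, min_eq_left hm]
  rw [Finset.sum_congr rfl hterm, ← Finset.sum_mul, ← map_sum, ← map_sum, ← as_sum]

lemma yd_add (v w : (Fin n ⊕ Fin n) →₀ ℕ) : yd (v + w) = yd v + yd w := by
  unfold yd
  simp [Finsupp.add_apply, Finset.sum_add_distrib]

lemma tot_add (v w : (Fin n ⊕ Fin n) →₀ ℕ) : tot (v + w) = tot v + tot w := by
  unfold tot
  simp [Finsupp.add_apply, Finset.sum_add_distrib]

lemma support_reesLift (p : MvPolynomial (Fin n) k) (m : ℕ) :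
    ∀ v ∈ (reesLift p m).support, ∃ u ∈ p.support, v = norE u m := by
  classical
  intro v hv
  rw [reesLift_def'] at hv
  have := MvPolynomial.support_sum hv
  rw [Finset.mem_biUnion] at this
  obtain ⟨u, hu, hv2⟩ := this
  rw [support_monomial] at hv2
  by_cases hc : coeff u p = 0
  · rw [if_pos hc] at hv2; exact absurd hv2 (Finset.notMem_empty v)
  · rw [if_neg hc, Finset.mem_singleton] at hv2
    exact ⟨u, hu, hv2⟩

end KR

theorem kernel_rees_presentation_generators
    (k : Type*) [Field k] (n : ℕ) (J : Ideal (MvPolynomial (Fin n) k))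
    (L : Set (MvPolynomial (Fin n) k))
    (hLhom : ∀ f ∈ L, ∃ d : ℕ, f.IsHomogeneous d)
    (hJL : J = Ideal.span L)
    (φ : MvPolynomial (Fin n ⊕ Fin n) k →ₐ[k]
      Polynomial (MvPolynomial (Fin n) k ⧸ J))
    (hφ : φ = aeval (Sum.elim
      (fun i => Polynomial.C (Ideal.Quotient.mk J (X i)))
      (fun i => Polynomial.C (Ideal.Quotient.mk J (X i)) * Polynomial.X))) :
    RingHom.ker (φ : MvPolynomial (Fin n ⊕ Fin n) k →+*
        Polynomial (MvPolynomial (Fin n) k ⧸ J)) =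
      Ideal.span
        ({g | ∃ f ∈ L, ∃ m ≤ f.totalDegree, g = reesLift f m} ∪
          {g | ∃ i j : Fin n, i < j ∧
            g = X (Sum.inl i) * X (Sum.inr j) - X (Sum.inl j) * X (Sum.inr i)}) := by
  classical
  subst hφ
  set F := Sum.elim
      (fun i => Polynomial.C (Ideal.Quotient.mk J (X i)))
      (fun i => Polynomial.C (Ideal.Quotient.mk J (X i)) * Polynomial.X) with hF
  set Q := Ideal.span
        ({g | ∃ f ∈ L, ∃ m ≤ f.totalDegree, g = reesLift f m} ∪
          {g | ∃ i j : Fin n, i < j ∧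
            g = X (Sum.inl i) * X (Sum.inr j) - X (Sum.inl j) * X (Sum.inr i)}) with hQ
  have hHsub : Ideal.span (KR.Hset n k) ≤ Q := by
    rw [hQ]
    apply Ideal.span_mono
    intro x hx
    exact Set.mem_union_right _ hx
  apply le_antisymm
  · -- ker ≤ span
    intro g hg
    simp only [RingHom.mem_ker, AlgHom.toRingHom_eq_coe, RingHom.coe_coe] at hg
    rw [← KR.sum_ycomp g]
    apply Ideal.sum_mem
    intro d _
    have hco : Ideal.Quotient.mk J (KR.mu (KR.ycomp d g)) = 0 := by
      rw [← KR.phi_coeff J g d, ← hF, hg]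
      simp
    have hmem : KR.mu (KR.ycomp d g) ∈ J := Ideal.Quotient.eq_zero_iff_mem.mp hco
    set h := KR.ycomp d g with hh
    have hsupp : ∀ v ∈ h.support, KR.yd v = min d (KR.tot v) := by
      intro v hv
      have h1 := KR.support_ycomp d g v hv
      have h2 := KR.yd_le_tot v
      omega
    have hkey : h - reesLift (KR.mu h) d ∈ Ideal.span (KR.Hset n k) :=
      KR.sub_reesLift_mu_mem d h hsupp
    rw [hJL] at hmem
    obtain ⟨c, hcsupp, hcsum⟩ := Submodule.mem_span_set.mp hmem
    have hsum : KR.mu h = ∑ f ∈ c.support, c f * f := by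
      rw [← hcsum, Finsupp.sum]
      exact Finset.sum_congr rfl (fun f _ => smul_eq_mul ..)
    have hdecomp : reesLift (KR.mu h) d = ∑ f ∈ c.support, reesLift (c f * f) d := by
      rw [hsum, KR.reesLift_sum]
    have hterm : ∀ f ∈ c.support, reesLift (c f * f) d ∈ Q := by
      intro f hf
      by_cases hf0 : f = 0
      · subst hf0
        rw [mul_zero, KR.reesLift_zero]
        exact Ideal.zero_mem _
      · have hfL : f ∈ L := hcsupp hf
        obtain ⟨df, hdf⟩ := hLhom f hfL
        have hdeg : f.totalDegree = df := hdf.totalDegree hf0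
        set m' := min d f.totalDegree with hm'
        set P := reesLift (c f) (d - m') * reesLift f m' with hP
        have hPQ : P ∈ Q := by
          rw [hQ, hP]
          exact Ideal.mul_mem_left _ _
            (Ideal.subset_span (Or.inl ⟨f, hfL, m', min_le_right _ _, rfl⟩))
        have hmuP : KR.mu P = c f * f := by
          rw [hP, map_mul, KR.mu_reesLift, KR.mu_reesLift]
        have hPsupp : ∀ v ∈ P.support, KR.yd v = min d (KR.tot v) := by
          intro v hv
          have hsub := MvPolynomial.support_mul _ _ hv
          rw [Finset.mem_add] at hsub
          obtain ⟨v1, hv1, v2, hv2, rfl⟩ := hsub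
          obtain ⟨u1, _, rfl⟩ := KR.support_reesLift (c f) (d - m') v1 hv1
          obtain ⟨u2, hu2, rfl⟩ := KR.support_reesLift f m' v2 hv2
          have hu2deg : ∑ l, u2 l = df := by
            rw [KR.sum_univ_eq_degree, Finsupp.degree_eq_weight_one]
            exact hdf (mem_support_iff.mp hu2)
          rw [KR.yd_add, KR.tot_add, KR.yd_norE, KR.yd_norE, KR.tot_norE, KR.tot_norE,
            hu2deg]
          rw [hdeg] at hm'
          omega
        have hPdiff := KR.sub_reesLift_mu_mem d P hPsupp
        rw [hmuP] at hPdiff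
        have := Q.sub_mem hPQ (hHsub hPdiff)
        simpa using this
    have hN : reesLift (KR.mu h) d ∈ Q := by
      rw [hdecomp]
      exact Ideal.sum_mem _ hterm
    have := Q.add_mem (hHsub hkey) hN
    simpa using this
  · -- span ≤ ker
    rw [Ideal.span_le]
    rintro g (⟨f, hfL, m, hm, rfl⟩ | ⟨i, j, hij, rfl⟩)
    · simp only [SetLike.mem_coe, RingHom.mem_ker, AlgHom.toRingHom_eq_coe, RingHom.coe_coe]
      by_cases hf0 : f = 0
      · subst hf0
        rw [KR.reesLift_zero, map_zero]
      · obtain ⟨d, hd⟩ := hLhom f hfL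
        have hdeg : f.totalDegree = d := hd.totalDegree hf0
        rw [hF, KR.phi_reesLift J f hd m (hdeg ▸ hm)]
        have : Ideal.Quotient.mk J f = 0 :=
          Ideal.Quotient.eq_zero_iff_mem.mpr (hJL ▸ Ideal.subset_span hfL)
        rw [this, map_zero, zero_mul]
    · simp only [SetLike.mem_coe, RingHom.mem_ker, AlgHom.toRingHom_eq_coe, RingHom.coe_coe]
      rw [hF]
      simp only [map_sub, map_mul, aeval_X, Sum.elim_inl, Sum.elim_inr]
      ring
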